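/- Let T be a finite connected graph satisfying property P and let 2 ≤ m < χ(T). Then the chromatic number of the exponential graph K_m^T equals m. -/

import Mathlib

/-- A finite graph in the sense of the paper: a symmetric adjacency relation,
loops are allowed. -/
structure LGraph (V : Type) where
  Adj : V → V → Prop
  symm : ∀ {u v}, Adj u v → Adj v u

namespace LGraph

variable {α β : Type}

/-- The complete graph `K_m` on vertex set `Fin m`. -/
def completeG (m : ℕ) : LGraph (Fin m) :=
  ⟨fun i j => i ≠ j, fun h => h.symm⟩

/-- `f` is a graph homomorphism from `G` to `H`. -/
def IsHom (G : LGraph α) (H : LGraph β) (f : α → β) : Prop :=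
  ∀ ⦃u v⦄, G.Adj u v → H.Adj (f u) (f v)

/-- `G` admits a proper coloring with `n` colors. -/
def Colorable (G : LGraph α) (n : ℕ) : Prop :=
  ∃ f : α → Fin n, G.IsHom (completeG n) f

/-- The chromatic number of `G`, as an extended natural number. -/
noncomputable def chromNum (G : LGraph α) : ℕ∞ :=
  sInf ((fun k : ℕ => (k : ℕ∞)) '' {k | G.Colorable k})

/-- The neighborhood of a vertex. -/
def neighborSet (G : LGraph α) (v : α) : Set α := {w | G.Adj v w}

/-- The categorical product `G × H`. -/
def tensor (G : LGraph α) (H : LGraph β) : LGraph (α × β) :=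
  ⟨fun p q => G.Adj p.1 q.1 ∧ H.Adj p.2 q.2, fun h => ⟨G.symm h.1, H.symm h.2⟩⟩

/-- The exponential graph `K_m^G`: vertices are all set maps `V(G) → [m]`,
and `f` is adjacent to `g` iff `f u ≠ g v` for every edge `(u,v)` of `G`
(loops are allowed). -/
def expG (G : LGraph α) (m : ℕ) : LGraph (α → Fin m) :=
  ⟨fun f g => ∀ u v, G.Adj u v → f u ≠ g v,
   fun {f g} h u v huv e => h v u (G.symm huv) e.symm⟩

/-- `G` is connected: nonempty and any two vertices are joined by a walk. -/
def Connected (G : LGraph α) : Prop :=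
  Nonempty α ∧ ∀ u v : α, Relation.ReflTransGen G.Adj u v

/-- Property `P` of the paper: `G` is simple, and for any two disjoint edges
`(v1,w1)` and `(v2,w2)`, if `(v2,v1)` is an edge then `(w2,v1)` or `(w2,w1)`
is an edge. -/
def PropertyP (G : LGraph α) : Prop :=
  (∀ v, ¬ G.Adj v v) ∧
  ∀ ⦃v1 w1 v2 w2 : α⦄, G.Adj v1 w1 → G.Adj v2 w2 →
    v1 ≠ v2 → v1 ≠ w2 → w1 ≠ v2 → w1 ≠ w2 →
    G.Adj v2 v1 → (G.Adj w2 v1 ∨ G.Adj w2 w1)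

/-- Base (unsymmetrized) relation for the Mycielskian:
level-0 copies are adjacent as in `G`, a level-1 vertex is adjacent to the
level-0 copies of the neighbours of its shadow, and the apex `none` is
adjacent to all level-1 vertices. -/
def mycRel (G : LGraph α) : Option (α × Bool) → Option (α × Bool) → Prop
  | some (a, false), some (b, false) => G.Adj a b
  | some (a, true), some (b, false) => G.Adj a b
  | none, some (_, true) => True
  | _, _ => False

/-- The Mycielskian `M(G)`. -/
def myc (G : LGraph α) : LGraph (Option (α × Bool)) :=
  ⟨fun u v => G.mycRel u v ∨ G.mycRel v u, fun h => h.symm⟩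

/-- The double Mycielskian `M(M(K_n))`. -/
def MMK (n : ℕ) : LGraph (Option (Option (Fin n × Bool) × Bool)) :=
  myc (myc (completeG n))

/-- The vertex `(x, i, j)` of `M(M(K_n))`. -/
def vtx {n : ℕ} (x : Fin n) (i j : Bool) : Option (Option (Fin n × Bool) × Bool) :=
  some (some (x, i), j)

/-- The vertex `w_i = (*, i)` of `M(M(K_n))` for `i ∈ {0,1}`. -/
def wv (n : ℕ) (i : Bool) : Option (Option (Fin n × Bool) × Bool) :=
  some (none, i)

/-- The apex vertex `w_2` of `M(M(K_n))`. -/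
def w2 (n : ℕ) : Option (Option (Fin n × Bool) × Bool) := none

end LGraph


namespace Graph

/-- In a connected graph with property `P`, every vertex is an endpoint of a
given edge or adjacent to one of its endpoints. -/
lemma dominate {α : Type} {T : LGraph α} (hconn : T.Connected) (hP : T.PropertyP)
    {u v : α} (huv : T.Adj u v) (x : α) :
    x = u ∨ x = v ∨ T.Adj u x ∨ T.Adj v x := by
  have h := hconn.2 u x
  induction h with
  | refl => exact Or.inl rfl
  | @tail b c hab hbc ih =>
    rcases ih with rfl | rfl | hub | hvb
    · exact Or.inr (Or.inr (Or.inl hbc))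
    · exact Or.inr (Or.inr (Or.inr hbc))
    · by_cases hbu : b = u
      · subst hbu; exact Or.inr (Or.inr (Or.inl hbc))
      by_cases hbv : b = v
      · subst hbv; exact Or.inr (Or.inr (Or.inr hbc))
      by_cases hcu : c = u
      · exact Or.inl hcu
      by_cases hcv : c = v
      · exact Or.inr (Or.inl hcv)
      · rcases hP.2 huv hbc (fun h => hbu h.symm) (fun h => hcu h.symm)
          (fun h => hbv h.symm) (fun h => hcv h.symm) (T.symm hub) with h | h
        · exact Or.inr (Or.inr (Or.inl (T.symm h)))
        · exact Or.inr (Or.inr (Or.inr (T.symm h)))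
    · by_cases hbu : b = u
      · subst hbu; exact Or.inr (Or.inr (Or.inl hbc))
      by_cases hbv : b = v
      · subst hbv; exact Or.inr (Or.inr (Or.inr hbc))
      by_cases hcu : c = u
      · exact Or.inl hcu
      by_cases hcv : c = v
      · exact Or.inr (Or.inl hcv)
      · rcases hP.2 (T.symm huv) hbc (fun h => hbv h.symm) (fun h => hcv h.symm)
          (fun h => hbu h.symm) (fun h => hcu h.symm) (T.symm hvb) with h | h
        · exact Or.inr (Or.inr (Or.inr (T.symm h)))
        · exact Or.inr (Or.inr (Or.inl (T.symm h)))

/-- If `T` is a finite connected graph with property `P` and `2 ≤ m < χ(T)`,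
then `χ(K_m^T) = m`. -/
theorem chromNum_expG_eq {α : Type} [Fintype α] (T : LGraph α)
    (hconn : T.Connected) (hP : T.PropertyP) (m : ℕ)
    (hm : 2 ≤ m) (hmlt : (m : ℕ∞) < T.chromNum) :
    (LGraph.expG T m).chromNum = m := by
  classical
  -- T is not m-colorable
  have hTnotcol : ¬ T.Colorable m := by
    intro h
    have hle : T.chromNum ≤ (m : ℕ∞) := sInf_le ⟨m, h, rfl⟩
    exact absurd hmlt (not_lt.2 hle)
  -- every map has a monochromatic edge
  have hmono : ∀ f : α → Fin m, ∃ u v, T.Adj u v ∧ f u = f v := by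
    intro f
    by_contra hcon
    push_neg at hcon
    exact hTnotcol ⟨f, fun u v h => hcon u v h⟩
  -- key: a neighbor of f in the exponential graph avoids the color of any
  -- monochromatic edge of f entirely
  have key : ∀ f g : α → Fin m, (LGraph.expG T m).Adj f g →
      ∀ u v, T.Adj u v → f u = f v → ∀ x, g x ≠ f u := by
    intro f g hadj u v huv hm x
    rcases dominate hconn hP huv x with rfl | rfl | h | h
    · exact fun e => hadj v x (T.symm huv) (hm.symm.trans e.symm)
    · exact fun e => hadj u x huv e.symm
    · exact fun e => hadj u x h e.symm
    · exact fun e => hadj v x h (hm.symm.trans e.symm)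
  choose U V hUV hfeq using hmono
  have hhom : (LGraph.expG T m).IsHom (LGraph.completeG m) (fun f => f (U f)) := by
    intro f g hadj
    have hne := key f g hadj (U f) (V f) (hUV f) (hfeq f) (U g)
    exact fun e => hne e.symm
  have hcol : (LGraph.expG T m).Colorable m := ⟨_, hhom⟩
  -- lower bound: the constants form an m-clique
  have hge : ∀ k : ℕ, (LGraph.expG T m).Colorable k → m ≤ k := by
    rintro k ⟨c, hc⟩
    have hinj : Function.Injective (fun i : Fin m => c (fun _ => i)) := by
      intro i j hij
      by_contra hne
      have hadj : (LGraph.expG T m).Adj (fun _ => i) (fun _ => j) := fun _ _ _ => hne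
      exact hc hadj hij
    simpa using Fintype.card_le_of_injective _ hinj
  refine le_antisymm (sInf_le ⟨m, hcol, rfl⟩) (le_sInf ?_)
  rintro x ⟨k, hk, rfl⟩
  exact Nat.cast_le.mpr (hge k hk)

end Graph
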